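/- Let f : [-1,1] → ℝ be twice continuously differentiable, a uniform on {-1,1}, b ~ N(0,1). There exists v(a,b) supported on {-1,1} × [0,2] such that for every x with |x| ≤ 1, E_{a,b}[v(a,b)·ReLU(a·x+b)] = f(x), and sup_{a,b}|v(a,b)| ≤ C · max over k ∈ {0,1,2} and x ∈ [-1,1] of |f^{(k)}(x)|, for an absolute constant C. -/

import Mathlib

open MeasureTheory ProbabilityTheory Real
open scoped NNReal ENNReal

section Helpers

lemma gauss_int' (g : ℝ → ℝ) :
    ∫ b, g b ∂(gaussianReal 0 1) = ∫ b, gaussianPDFReal 0 1 b * g b := by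
  rw [gaussianReal_of_var_ne_zero 0 one_ne_zero]
  have h : gaussianPDF 0 1 = fun x => ((Real.toNNReal (gaussianPDFReal 0 1 x) : ℝ≥0) : ℝ≥0∞) := rfl
  rw [h, integral_withDensity_eq_integral_smul ((measurable_gaussianPDFReal 0 1).real_toNNReal) g]
  congr 1; ext x
  rw [NNReal.smul_def, smul_eq_mul, Real.coe_toNNReal _ (gaussianPDFReal_nonneg 0 1 x)]

lemma phi_cont' : Continuous (gaussianPDFReal 0 1) := by
  rw [gaussianPDFReal_def]; fun_prop

lemma phi_pos' (b : ℝ) : 0 < gaussianPDFReal 0 1 b := gaussianPDFReal_pos _ _ _ one_ne_zero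

lemma phi_mono' {b : ℝ} (h0 : 0 ≤ b) (h1 : b ≤ 1) :
    gaussianPDFReal 0 1 1 ≤ gaussianPDFReal 0 1 b := by
  unfold gaussianPDFReal
  simp only [sub_zero]
  gcongr

noncomputable def Pconst : ℝ := ∫ b in (1:ℝ)..2, gaussianPDFReal 0 1 b
noncomputable def Qconst : ℝ := ∫ b in (1:ℝ)..2, gaussianPDFReal 0 1 b * b

lemma Pconst_pos : 0 < Pconst :=
  intervalIntegral.intervalIntegral_pos_of_pos_on (phi_cont'.intervalIntegrable _ _)
    (fun y _ => phi_pos' y) one_lt_two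

lemma Qconst_pos : 0 < Qconst :=
  intervalIntegral.intervalIntegral_pos_of_pos_on
    ((phi_cont'.mul continuous_id).intervalIntegrable _ _)
    (fun y hy => mul_pos (phi_pos' y) (lt_trans one_pos hy.1)) one_lt_two

noncomputable def alphaC (f : ℝ → ℝ) : ℝ :=
  f 1 - deriv f 1 - f 0 + deriv f (-1) + f (-1)
noncomputable def betaC (f : ℝ → ℝ) : ℝ := deriv f 1 - deriv f 0 + deriv f (-1)
noncomputable def ccC (f : ℝ → ℝ) : ℝ := betaC f / Pconst + alphaC f / Qconst
noncomputable def ddC (f : ℝ → ℝ) : ℝ := -betaC f / Pconst + alphaC f / Qconst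

lemma affine_int (f : ℝ → ℝ) (x : ℝ) :
    ∫ b in (1:ℝ)..2, gaussianPDFReal 0 1 b * ((ccC f * (x + b) + ddC f * (-x + b)) / 2)
      = betaC f * x + alphaC f := by
  have e1 : ∫ b in (1:ℝ)..2, gaussianPDFReal 0 1 b * ((ccC f * (x + b) + ddC f * (-x + b)) / 2)
      = ∫ b in (1:ℝ)..2, (((ccC f - ddC f) * x / 2) * gaussianPDFReal 0 1 b
          + ((ccC f + ddC f) / 2) * (gaussianPDFReal 0 1 b * b)) := by
    apply intervalIntegral.integral_congr
    intro b _
    show gaussianPDFReal 0 1 b * ((ccC f * (x + b) + ddC f * (-x + b)) / 2) = _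
    ring
  have hi1 : IntervalIntegrable (fun b => (ccC f - ddC f) * x / 2 * gaussianPDFReal 0 1 b)
      volume 1 2 := (continuous_const.mul phi_cont').intervalIntegrable _ _
  have hi2 : IntervalIntegrable (fun b => (ccC f + ddC f) / 2 * (gaussianPDFReal 0 1 b * b))
      volume 1 2 := (continuous_const.mul (phi_cont'.mul continuous_id)).intervalIntegrable _ _
  rw [e1, intervalIntegral.integral_add hi1 hi2,
    intervalIntegral.integral_const_mul, intervalIntegral.integral_const_mul]
  rw [show (∫ b in (1:ℝ)..2, gaussianPDFReal 0 1 b) = Pconst from rfl,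
    show (∫ b in (1:ℝ)..2, gaussianPDFReal 0 1 b * b) = Qconst from rfl]
  have hc : ccC f - ddC f = 2 * betaC f / Pconst := by unfold ccC ddC; ring
  have hd : ccC f + ddC f = 2 * alphaC f / Qconst := by unfold ccC ddC; ring
  rw [hc, hd, div_mul_eq_mul_div, div_mul_eq_mul_div, div_mul_eq_mul_div, div_mul_eq_mul_div,
    div_div]
  rw [mul_comm (2 * betaC f * x) Pconst]
  rw [mul_div_mul_left _ _ Pconst_pos.ne', div_mul_cancel₀ _ Qconst_pos.ne']
  ring

lemma cd1' {f : ℝ → ℝ} (hf : ContDiff ℝ 2 f) : ContDiff ℝ 1 (deriv f) := by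
  rw [show (2 : WithTop ℕ∞) = 1 + 1 from rfl, contDiff_succ_iff_deriv] at hf
  exact hf.2.2

lemma f''_cont' {f : ℝ → ℝ} (hf : ContDiff ℝ 2 f) : Continuous (deriv (deriv f)) :=
  (cd1' hf).continuous_deriv le_rfl

lemma f'_hasDeriv' {f : ℝ → ℝ} (hf : ContDiff ℝ 2 f) (t : ℝ) :
    HasDerivAt (deriv f) (deriv (deriv f) t) t :=
  (((cd1' hf).differentiable (by norm_num)) t).hasDerivAt

lemma f_hasDeriv' {f : ℝ → ℝ} (hf : ContDiff ℝ 2 f) (t : ℝ) : HasDerivAt f (deriv f t) t :=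
  ((hf.differentiable (by norm_num)) t).hasDerivAt

lemma ftc1' {f : ℝ → ℝ} (hf : ContDiff ℝ 2 f) (x : ℝ) :
    ∫ t in x..1, deriv (deriv f) t * (t - x) = deriv f 1 * (1 - x) - f 1 + f x := by
  have key : ∀ t ∈ Set.uIcc x 1, HasDerivAt (fun t => deriv f t * (t - x) - f t)
      (deriv (deriv f) t * (t - x)) t := by
    intro t _
    have h2 := ((f'_hasDeriv' hf t).mul ((hasDerivAt_id t).sub_const x)).sub (f_hasDeriv' hf t)
    exact h2.congr_deriv (by simp only [id]; ring)
  have hint : IntervalIntegrable (fun t => deriv (deriv f) t * (t - x)) volume x 1 :=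
    ((f''_cont' hf).mul (continuous_id.sub continuous_const)).intervalIntegrable x 1
  rw [intervalIntegral.integral_eq_sub_of_hasDerivAt key hint]
  ring

lemma ftc2' {f : ℝ → ℝ} (hf : ContDiff ℝ 2 f) (x : ℝ) :
    ∫ t in (-1 : ℝ)..0, deriv (deriv f) t * (x - t)
      = deriv f 0 * x + f 0 - (deriv f (-1) * (x + 1) + f (-1)) := by
  have key : ∀ t ∈ Set.uIcc (-1 : ℝ) 0, HasDerivAt (fun t => deriv f t * (x - t) + f t)
      (deriv (deriv f) t * (x - t)) t := by
    intro t _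
    have h2 := ((f'_hasDeriv' hf t).mul ((hasDerivAt_const t x).sub (hasDerivAt_id t))).add
      (f_hasDeriv' hf t)
    exact h2.congr_deriv (by simp only [Pi.sub_apply, id]; ring)
  have hint : IntervalIntegrable (fun t => deriv (deriv f) t * (x - t)) volume (-1) 0 :=
    ((f''_cont' hf).mul (continuous_const.sub continuous_id)).intervalIntegrable (-1) 0
  rw [intervalIntegral.integral_eq_sub_of_hasDerivAt key hint]
  ring

lemma split_max' {f : ℝ → ℝ} (hc : Continuous (deriv (deriv f))) {x : ℝ}
    (hx1 : -1 ≤ x) (hx2 : x ≤ 1) :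
    ∫ t in (-1:ℝ)..1, deriv (deriv f) t * max (t - x) 0
      = ∫ t in x..1, deriv (deriv f) t * (t - x) := by
  have hcont : Continuous fun t => deriv (deriv f) t * max (t - x) 0 :=
    hc.mul ((continuous_id.sub continuous_const).max continuous_const)
  rw [← intervalIntegral.integral_add_adjacent_intervals (a := (-1:ℝ)) (b := x) (c := 1)
      (hcont.intervalIntegrable _ _) (hcont.intervalIntegrable _ _)]
  have h1 : ∫ t in (-1:ℝ)..x, deriv (deriv f) t * max (t - x) 0 = 0 := by
    rw [intervalIntegral.integral_congr (g := fun _ => 0)]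
    · simp
    · intro t ht
      rw [Set.uIcc_of_le hx1] at ht
      have : t - x ≤ 0 := by linarith [ht.2]
      simp [max_eq_right this]
  have h2 : ∫ t in x..1, deriv (deriv f) t * max (t - x) 0
      = ∫ t in x..1, deriv (deriv f) t * (t - x) := by
    apply intervalIntegral.integral_congr
    intro t ht
    rw [Set.uIcc_of_le hx2] at ht
    have : 0 ≤ t - x := by linarith [ht.1]
    simp [max_eq_left this]
  rw [h1, h2, zero_add]

lemma core' {f : ℝ → ℝ} (hf : ContDiff ℝ 2 f) {x : ℝ} (hx1 : -1 ≤ x) (hx2 : x ≤ 1) :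
    ∫ b in (0:ℝ)..1,
        (deriv (deriv f) (-b) * max (x + b) 0 + deriv (deriv f) b * max (-x + b) 0)
      = deriv f 0 * x + f 0 - (deriv f (-1) * (x + 1) + f (-1))
        + (deriv f 1 * (1 - x) - f 1 + f x) := by
  have hc := f''_cont' hf
  have hmx : Continuous fun t : ℝ => deriv (deriv f) t * max (t - x) 0 :=
    hc.mul ((continuous_id.sub continuous_const).max continuous_const)
  have hxt : Continuous fun t : ℝ => deriv (deriv f) t * (x - t) :=
    hc.mul (continuous_const.sub continuous_id)
  have e1 : ∫ b in (0:ℝ)..1,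
        (deriv (deriv f) (-b) * max (x + b) 0 + deriv (deriv f) b * max (-x + b) 0)
      = (∫ b in (0:ℝ)..1, deriv (deriv f) (-b) * max (x + b) 0)
        + ∫ b in (0:ℝ)..1, deriv (deriv f) b * max (-x + b) 0 := by
    apply intervalIntegral.integral_add
    · have : Continuous fun b : ℝ => deriv (deriv f) (-b) * max (x + b) 0 :=
        (hc.comp continuous_neg).mul ((continuous_const.add continuous_id).max continuous_const)
      exact this.intervalIntegrable _ _
    · have : Continuous fun b : ℝ => deriv (deriv f) b * max (-x + b) 0 :=
        hc.mul ((continuous_const.add continuous_id).max continuous_const)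
      exact this.intervalIntegrable _ _
  have e2 : ∫ b in (0:ℝ)..1, deriv (deriv f) (-b) * max (x + b) 0
      = ∫ t in (-1:ℝ)..0, deriv (deriv f) t * max (x - t) 0 := by
    have := intervalIntegral.integral_comp_neg (a := (0:ℝ)) (b := 1)
      (fun t => deriv (deriv f) t * max (x - t) 0)
    simp only [sub_neg_eq_add] at this
    rw [this]
    norm_num
  have e3 : ∫ t in (-1:ℝ)..0, deriv (deriv f) t * max (x - t) 0
      = (∫ t in (-1:ℝ)..0, deriv (deriv f) t * (x - t))
        + ∫ t in (-1:ℝ)..0, deriv (deriv f) t * max (t - x) 0 := by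
    rw [← intervalIntegral.integral_add (hxt.intervalIntegrable _ _) (hmx.intervalIntegrable _ _)]
    apply intervalIntegral.integral_congr
    intro t _
    have h5 : max (x - t) 0 = (x - t) + max (t - x) 0 := by
      rcases le_total (x - t) 0 with h | h
      · rw [max_eq_right h, max_eq_left (by linarith)]; ring
      · rw [max_eq_left h, max_eq_right (by linarith)]; ring
    show deriv (deriv f) t * max (x - t) 0
        = deriv (deriv f) t * (x - t) + deriv (deriv f) t * max (t - x) 0
    rw [h5]; ring
  have e4 : ∫ b in (0:ℝ)..1, deriv (deriv f) b * max (-x + b) 0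
      = ∫ t in (0:ℝ)..1, deriv (deriv f) t * max (t - x) 0 := by
    apply intervalIntegral.integral_congr
    intro t _
    show deriv (deriv f) t * max (-x + t) 0 = deriv (deriv f) t * max (t - x) 0
    rw [show -x + t = t - x by ring]
  have e5 : (∫ t in (-1:ℝ)..0, deriv (deriv f) t * max (t - x) 0)
      + ∫ t in (0:ℝ)..1, deriv (deriv f) t * max (t - x) 0
      = ∫ t in (-1:ℝ)..1, deriv (deriv f) t * max (t - x) 0 :=
    intervalIntegral.integral_add_adjacent_intervals
      (hmx.intervalIntegrable _ _) (hmx.intervalIntegrable _ _)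
  rw [e1, e2, e3, e4, add_assoc, e5, split_max' hc hx1 hx2, ftc1' hf, ftc2' hf]

noncomputable def vvC (f : ℝ → ℝ) (a b : ℝ) : ℝ :=
  if b ∈ Set.Icc (0:ℝ) 1 then
    2 * deriv (deriv f) (if a = 1 then -b else b) / gaussianPDFReal 0 1 b
  else if b ∈ Set.Icc (0:ℝ) 2 then (if a = 1 then ccC f else ddC f) else 0

lemma vv_one (f : ℝ → ℝ) (b : ℝ) : vvC f 1 b =
    if b ∈ Set.Icc (0:ℝ) 1 then 2 * deriv (deriv f) (-b) / gaussianPDFReal 0 1 b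
    else if b ∈ Set.Icc (0:ℝ) 2 then ccC f else 0 := by
  simp [vvC]

lemma vv_neg (f : ℝ → ℝ) (b : ℝ) : vvC f (-1) b =
    if b ∈ Set.Icc (0:ℝ) 1 then 2 * deriv (deriv f) b / gaussianPDFReal 0 1 b
    else if b ∈ Set.Icc (0:ℝ) 2 then ddC f else 0 := by
  norm_num [vvC]

noncomputable def Gfun (f : ℝ → ℝ) (x b : ℝ) : ℝ :=
  gaussianPDFReal 0 1 b *
    ((vvC f 1 b * max (x + b) 0 + vvC f (-1) b * max (-x + b) 0) / 2)

lemma main_int {f : ℝ → ℝ} (hf : ContDiff ℝ 2 f) {x : ℝ} (hx1 : -1 ≤ x) (hx2 : x ≤ 1) :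
    ∫ b, Gfun f x b = f x := by
  set k1 : ℝ → ℝ := fun b =>
    deriv (deriv f) (-b) * max (x + b) 0 + deriv (deriv f) b * max (-x + b) 0 with hk1
  set k2 : ℝ → ℝ := fun b =>
    gaussianPDFReal 0 1 b * ((ccC f * (x + b) + ddC f * (-x + b)) / 2) with hk2
  have hk1c : Continuous k1 := by
    have hc := f''_cont' hf
    exact ((hc.comp continuous_neg).mul
      ((continuous_const.add continuous_id).max continuous_const)).add
      (hc.mul ((continuous_const.add continuous_id).max continuous_const))
  have hk2c : Continuous k2 := by
    apply phi_cont'.mul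
    fun_prop
  have heq1 : Set.EqOn (Gfun f x) k1 (Set.Icc (0:ℝ) 1) := by
    intro b hb
    simp only [Gfun, vv_one, vv_neg, if_pos hb, hk1]
    have hne := (phi_pos' b).ne'
    field_simp
  have heq2 : Set.EqOn (Gfun f x) k2 (Set.Ioc (1:ℝ) 2) := by
    intro b hb
    have hb1 : b ∉ Set.Icc (0:ℝ) 1 := fun h => absurd h.2 (not_le.mpr hb.1)
    have hb2 : b ∈ Set.Icc (0:ℝ) 2 := ⟨le_trans zero_le_one hb.1.le, hb.2⟩
    have hm1 : max (x + b) 0 = x + b := max_eq_left (by linarith [hb.1])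
    have hm2 : max (-x + b) 0 = -x + b := max_eq_left (by linarith [hb.1])
    simp only [Gfun, vv_one, vv_neg, if_neg hb1, if_pos hb2, hm1, hm2, hk2]
  have hsupp : Function.support (Gfun f x) ⊆ Set.Icc (0:ℝ) 2 := by
    intro b hb
    by_contra hb2
    apply hb
    have hb1 : b ∉ Set.Icc (0:ℝ) 1 := fun h => hb2 (Set.Icc_subset_Icc le_rfl one_le_two h)
    simp only [Gfun, vv_one, vv_neg, if_neg hb1, if_neg hb2]
    ring
  have hi1 : IntegrableOn (Gfun f x) (Set.Icc (0:ℝ) 1) volume :=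
    (hk1c.integrableOn_Icc).congr_fun (fun b hb => (heq1 hb).symm) measurableSet_Icc
  have hi2 : IntegrableOn (Gfun f x) (Set.Ioc (1:ℝ) 2) volume :=
    ((hk2c.integrableOn_Icc).mono_set Set.Ioc_subset_Icc_self).congr_fun
      (fun b hb => (heq2 hb).symm) measurableSet_Ioc
  have hsplit : Set.Icc (0:ℝ) 2 = Set.Icc (0:ℝ) 1 ∪ Set.Ioc (1:ℝ) 2 :=
    (Set.Icc_union_Ioc_eq_Icc zero_le_one one_le_two).symm
  rw [← Set.indicator_eq_self.mpr hsupp, integral_indicator measurableSet_Icc, hsplit,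
    setIntegral_union ((Set.Iic_disjoint_Ioc le_rfl).mono Set.Icc_subset_Iic_self le_rfl) measurableSet_Ioc hi1 hi2]
  have hI1 : ∫ b in Set.Icc (0:ℝ) 1, Gfun f x b
      = deriv f 0 * x + f 0 - (deriv f (-1) * (x + 1) + f (-1))
        + (deriv f 1 * (1 - x) - f 1 + f x) := by
    rw [setIntegral_congr_fun measurableSet_Icc heq1, integral_Icc_eq_integral_Ioc,
      ← intervalIntegral.integral_of_le zero_le_one]
    exact core' hf hx1 hx2
  have hI2 : ∫ b in Set.Ioc (1:ℝ) 2, Gfun f x b = betaC f * x + alphaC f := by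
    rw [setIntegral_congr_fun measurableSet_Ioc heq2,
      ← intervalIntegral.integral_of_le one_le_two]
    exact affine_int f x
  rw [hI1, hI2]
  unfold alphaC betaC
  ring

end Helpers

theorem stmt2 :
    ∃ C : ℝ, 0 < C ∧
      ∀ f : ℝ → ℝ, ContDiff ℝ 2 f →
        ∃ v : ℝ → ℝ → ℝ,
          (∀ a b : ℝ, b ∉ Set.Icc (0 : ℝ) 2 → v a b = 0) ∧
          (∀ M : ℝ,
            (∀ x ∈ Set.Icc (-1 : ℝ) 1,
              |f x| ≤ M ∧ |deriv f x| ≤ M ∧ |deriv (deriv f) x| ≤ M) →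
            ∀ a b : ℝ, |v a b| ≤ C * M) ∧
          (∀ x : ℝ, |x| ≤ 1 →
            (∫ b, (v 1 b * max (x + b) 0 + v (-1) b * max (-x + b) 0) / 2
              ∂(gaussianReal 0 1)) = f x) := by
  have hP := Pconst_pos
  have hQ := Qconst_pos
  have hphi1 := phi_pos' 1
  refine ⟨2 / gaussianPDFReal 0 1 1 + 3 / Pconst + 5 / Qconst, by positivity, ?_⟩
  intro f hf
  refine ⟨vvC f, ?_, ?_, ?_⟩
  · intro a b hb
    have hb1 : b ∉ Set.Icc (0:ℝ) 1 := fun h => hb (Set.Icc_subset_Icc le_rfl one_le_two h)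
    simp only [vvC, if_neg hb1, if_neg hb]
  · -- bound
    intro M hM a b
    have hM0 : 0 ≤ M := le_trans (abs_nonneg _) (hM 0 (by norm_num)).1
    unfold vvC
    by_cases hb1 : b ∈ Set.Icc (0:ℝ) 1
    · simp only [if_pos hb1]
      have harg : (if a = 1 then -b else b) ∈ Set.Icc (-1:ℝ) 1 := by
        split <;> constructor <;> linarith [hb1.1, hb1.2]
      have hbnd : |deriv (deriv f) (if a = 1 then -b else b)| ≤ M := (hM _ harg).2.2
      have hmono := phi_mono' hb1.1 hb1.2
      rw [abs_div, abs_of_pos (phi_pos' b), abs_mul, abs_two]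
      have h1 : 2 * |deriv (deriv f) (if a = 1 then -b else b)| / gaussianPDFReal 0 1 b
          ≤ 2 * M / gaussianPDFReal 0 1 1 :=
        div_le_div₀ (by positivity) (by linarith) hphi1 hmono
      have h2 : 2 * M / gaussianPDFReal 0 1 1
          ≤ (2 / gaussianPDFReal 0 1 1 + 3 / Pconst + 5 / Qconst) * M := by
        have e : 2 * M / gaussianPDFReal 0 1 1 = 2 / gaussianPDFReal 0 1 1 * M := by ring
        rw [e, add_mul, add_mul]
        have t1 : 0 ≤ 3 / Pconst * M := by positivity
        have t2 : 0 ≤ 5 / Qconst * M := by positivity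
        linarith
      linarith
    · simp only [if_neg hb1]
      have habs : |f 1| ≤ M := (hM 1 (by norm_num)).1
      have habs2 : |f 0| ≤ M := (hM 0 (by norm_num)).1
      have habs3 : |f (-1)| ≤ M := (hM (-1) (by norm_num)).1
      have hd1 : |deriv f 1| ≤ M := (hM 1 (by norm_num)).2.1
      have hd2 : |deriv f 0| ≤ M := (hM 0 (by norm_num)).2.1
      have hd3 : |deriv f (-1)| ≤ M := (hM (-1) (by norm_num)).2.1
      have halpha : |alphaC f| ≤ 5 * M := by
        unfold alphaC
        calc |f 1 - deriv f 1 - f 0 + deriv f (-1) + f (-1)|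
            ≤ |f 1| + |deriv f 1| + |f 0| + |deriv f (-1)| + |f (-1)| := by
              apply (abs_add_le _ _).trans
              gcongr
              apply (abs_add_le _ _).trans
              gcongr
              apply (abs_sub _ _).trans
              gcongr
              exact abs_sub _ _
          _ ≤ 5 * M := by linarith
      have hbeta : |betaC f| ≤ 3 * M := by
        unfold betaC
        calc |deriv f 1 - deriv f 0 + deriv f (-1)|
            ≤ |deriv f 1| + |deriv f 0| + |deriv f (-1)| := by
              apply (abs_add_le _ _).trans
              gcongr
              exact abs_sub _ _
          _ ≤ 3 * M := by linarith
      have hcd : ∀ y ∈ ({ccC f, ddC f} : Set ℝ), |y| ≤ 3 * M / Pconst + 5 * M / Qconst := by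
        intro y hy
        have h : |y| ≤ |betaC f| / Pconst + |alphaC f| / Qconst := by
          rcases hy with rfl | rfl
          · unfold ccC
            apply (abs_add_le _ _).trans
            rw [abs_div, abs_div, abs_of_pos hP, abs_of_pos hQ]
          · unfold ddC
            apply (abs_add_le _ _).trans
            rw [abs_div, abs_div, abs_of_pos hP, abs_of_pos hQ, abs_neg]
        refine h.trans ?_
        gcongr
      have hfin : 3 * M / Pconst + 5 * M / Qconst
          ≤ (2 / gaussianPDFReal 0 1 1 + 3 / Pconst + 5 / Qconst) * M := by
        rw [add_mul, add_mul]
        have e1 : 3 * M / Pconst = 3 / Pconst * M := by ring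
        have e2 : 5 * M / Qconst = 5 / Qconst * M := by ring
        rw [e1, e2]
        have t3 : 0 ≤ 2 / gaussianPDFReal 0 1 1 * M := by positivity
        linarith
      by_cases hb2 : b ∈ Set.Icc (0:ℝ) 2
      · simp only [if_pos hb2]
        refine le_trans ?_ hfin
        split
        · exact hcd _ (by simp)
        · exact hcd _ (by simp)
      · rw [if_neg hb2, abs_zero]
        have hC : 0 < 2 / gaussianPDFReal 0 1 1 + 3 / Pconst + 5 / Qconst := by positivity
        exact mul_nonneg hC.le hM0
  · -- the integral identity
    intro x hx
    obtain ⟨hx1, hx2⟩ := abs_le.mp hx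
    rw [gauss_int']
    have key : ∀ b : ℝ, gaussianPDFReal 0 1 b *
        ((vvC f 1 b * max (x + b) 0 + vvC f (-1) b * max (-x + b) 0) / 2) = Gfun f x b :=
      fun b => rfl
    simp only [key]
    exact main_int hf hx1 hx2
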